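/- If u : D → [0,∞) is quasi-nearly subharmonic and p > 0, then u^p is quasi-nearly subharmonic (with a possibly different constant). -/

import Mathlib

open MeasureTheory Metric Set Filter
noncomputable def unitBallVol (n : ℕ) : ℝ :=
  (volume (ball (0 : EuclideanSpace ℝ (Fin n)) 1)).toReal

lemma unitBallVol_pos {n : ℕ} : 0 < unitBallVol n := by
  have h1 : (0:ENNReal) < volume (ball (0 : EuclideanSpace ℝ (Fin n)) 1) :=
    measure_ball_pos _ _ one_pos
  have h2 : volume (ball (0 : EuclideanSpace ℝ (Fin n)) 1) < ⊤ := measure_ball_lt_top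
  exact ENNReal.toReal_pos h1.ne' h2.ne

lemma qns_bounded_on_closedBall {n : ℕ} {D : Set (EuclideanSpace ℝ (Fin n))}
    (hDopen : IsOpen D) {u : EuclideanSpace ℝ (Fin n) → ℝ}
    (hnonneg : ∀ x, 0 ≤ u x) (hloc : LocallyIntegrableOn u D volume)
    {K : ℝ} (hK : 1 ≤ K)
    (hu : ∀ x r, 0 < r → closedBall x r ⊆ D →
      u x ≤ K / (unitBallVol n * r ^ n) * ∫ y in ball x r, u y)
    {x : EuclideanSpace ℝ (Fin n)} {r : ℝ} (hball : closedBall x r ⊆ D) :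
    ∃ M : ℝ, 1 ≤ M ∧ ∀ y ∈ closedBall x r, u y ≤ M := by
  have hν : (0:ℝ) < unitBallVol n := unitBallVol_pos
  have hcb : IsCompact (closedBall x r) := isCompact_closedBall x r
  have hrho : ∀ z ∈ closedBall x r, ∃ ρ : ℝ, 0 < ρ ∧ closedBall z ρ ⊆ D := by
    intro z hz
    obtain ⟨ε, hε, hsub⟩ := Metric.isOpen_iff.1 hDopen z (hball hz)
    exact ⟨ε/2, by positivity, (closedBall_subset_ball (by linarith)).trans hsub⟩
  choose ρ hρ0 hρD using hrho
  set C : ∀ z ∈ closedBall x r, ℝ := fun z hz =>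
    K / (unitBallVol n * (ρ z hz / 2) ^ n) * ∫ w in ball z (ρ z hz), u w with hC
  have key : ∀ z (hz : z ∈ closedBall x r), ∀ y ∈ ball z (ρ z hz / 2), u y ≤ C z hz := by
    intro z hz y hy
    have hρpos := hρ0 z hz
    have h1 : closedBall y (ρ z hz / 2) ⊆ D := by
      refine Subset.trans ?_ (hρD z hz)
      intro w hw
      have : dist w z ≤ dist w y + dist y z := dist_triangle w y z
      have hyz : dist y z < ρ z hz / 2 := hy
      have hwy : dist w y ≤ ρ z hz / 2 := hw
      exact mem_closedBall.2 (by linarith)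
    have h2 := hu y (ρ z hz / 2) (by positivity) h1
    refine h2.trans ?_
    have hIu : IntegrableOn u (ball z (ρ z hz)) volume :=
      (hloc.integrableOn_compact_subset (hρD z hz)
        (isCompact_closedBall z (ρ z hz))).mono_set ball_subset_closedBall
    have hsub2 : ball y (ρ z hz / 2) ⊆ ball z (ρ z hz) := by
      intro w hw
      have : dist w z ≤ dist w y + dist y z := dist_triangle w y z
      have hyz : dist y z < ρ z hz / 2 := hy
      have hwy : dist w y < ρ z hz / 2 := hw
      exact mem_ball.2 (by linarith)
    have hmono : ∫ w in ball y (ρ z hz / 2), u w ≤ ∫ w in ball z (ρ z hz), u w :=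
      setIntegral_mono_set hIu (ae_of_all _ hnonneg) (HasSubset.Subset.eventuallyLE hsub2)
    exact mul_le_mul_of_nonneg_left hmono (by positivity)
  set g : ↥(closedBall x r) → ℝ := fun z => max (C z z.2) 0 with hg
  obtain ⟨t, ht⟩ := hcb.elim_nhds_subcover' (fun z hz => ball z (ρ z hz / 2))
    (fun z hz => ball_mem_nhds _ (half_pos (hρ0 z hz)))
  refine ⟨1 + ∑ z ∈ t, g z, le_add_of_nonneg_right
    (Finset.sum_nonneg fun _ _ => le_max_right _ _), ?_⟩
  intro y hy
  have := ht hy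
  simp only [mem_iUnion] at this
  obtain ⟨z, hzt, hyz⟩ := this
  calc u y ≤ C z z.2 := key z z.2 y hyz
    _ ≤ g z := le_max_left _ _
    _ ≤ ∑ z ∈ t, g z :=
        Finset.single_le_sum (f := g) (fun i _ => le_max_right _ 0) hzt
    _ ≤ 1 + ∑ z ∈ t, g z := le_add_of_nonneg_left zero_le_one

theorem quasiNearlySubharmonic_rpow
    {n : ℕ} (hn : 2 ≤ n) (D : Set (EuclideanSpace ℝ (Fin n)))
    (hDopen : IsOpen D) (hDconn : IsConnected D)
    (u : EuclideanSpace ℝ (Fin n) → ℝ)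
    (hmeas : Measurable u) (hnonneg : ∀ x, 0 ≤ u x)
    (hloc : LocallyIntegrableOn u D volume)
    (p : ℝ) (hp : 0 < p)
    (hqns : ∃ K : ℝ, 1 ≤ K ∧ ∀ x r, 0 < r → closedBall x r ⊆ D →
      u x ≤ K / (unitBallVol n * r ^ n) * ∫ y in ball x r, u y) :
    ∃ K' : ℝ, 1 ≤ K' ∧ ∀ x r, 0 < r → closedBall x r ⊆ D →
      u x ^ p ≤ K' / (unitBallVol n * r ^ n) * ∫ y in ball x r, u y ^ p := by
  obtain ⟨K, hK, hu⟩ := hqns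
  have hν : (0:ℝ) < unitBallVol n := unitBallVol_pos
  have hK0 : (0:ℝ) < K := lt_of_lt_of_le one_pos hK
  have hvol : ∀ (x : EuclideanSpace ℝ (Fin n)) {r : ℝ}, 0 ≤ r →
      (volume (ball x r)).toReal = unitBallVol n * r ^ n := by
    intro x r hr
    haveI : Nontrivial (EuclideanSpace ℝ (Fin n)) := by
      exact ⟨⟨0, EuclideanSpace.single ⟨0, by omega⟩ 1, by
        intro h
        have := congrArg (fun v => v ⟨0, by omega⟩) h
        simp [EuclideanSpace.single] at this⟩⟩
    rw [Measure.addHaar_ball volume x hr, ENNReal.toReal_mul,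
      ENNReal.toReal_ofReal (by positivity), finrank_euclideanSpace_fin, unitBallVol, mul_comm]
  rcases le_or_gt 1 p with hp1 | hp1
  · -- case p ≥ 1 : Jensen's inequality
    refine ⟨K ^ p, Real.one_le_rpow hK hp.le, ?_⟩
    intro x r hr hball
    obtain ⟨M, hM1, hMb⟩ := qns_bounded_on_closedBall hDopen hnonneg hloc hK hu hball
    have hVpos : (0:ℝ) < unitBallVol n * r ^ n := by positivity
    have hIu : IntegrableOn u (ball x r) volume :=
      (hloc.integrableOn_compact_subset hball (isCompact_closedBall x r)).mono_set
        ball_subset_closedBall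
    have hIup : IntegrableOn (fun z => u z ^ p) (ball x r) volume := by
      apply Measure.integrableOn_of_bounded (M := M ^ p) measure_ball_lt_top.ne
        ((hmeas.pow measurable_const).aestronglyMeasurable)
      filter_upwards [ae_restrict_mem measurableSet_ball] with z hz
      rw [Real.norm_of_nonneg (Real.rpow_nonneg (hnonneg z) p)]
      exact Real.rpow_le_rpow (hnonneg z) (hMb z (ball_subset_closedBall hz)) hp.le
    haveI : IsFiniteMeasure (volume.restrict (ball x r)) :=
      ⟨by rw [Measure.restrict_apply_univ]; exact measure_ball_lt_top⟩
    haveI : NeZero (volume.restrict (ball x r)) :=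
      ⟨Measure.measure_univ_ne_zero.1 (by
        rw [Measure.restrict_apply_univ]; exact (measure_ball_pos _ _ hr).ne')⟩
    have hcont : ContinuousOn (fun t : ℝ => t ^ p) (Ici 0) := fun t _ =>
      (Real.continuousAt_rpow_const t p (Or.inr hp.le)).continuousWithinAt
    have hjen := (convexOn_rpow hp1).map_average_le hcont isClosed_Ici
      (ae_of_all _ fun z => hnonneg z) hIu hIup
    have hIval : (0:ℝ) ≤ ∫ z in ball x r, u z :=
      setIntegral_nonneg measurableSet_ball fun z _ => hnonneg z
    have havg : ⨍ z in ball x r, u z = (unitBallVol n * r ^ n)⁻¹ * ∫ z in ball x r, u z := by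
      rw [setAverage_eq, measureReal_def, hvol x hr.le, smul_eq_mul]
    have havgp : ⨍ z in ball x r, u z ^ p
        = (unitBallVol n * r ^ n)⁻¹ * ∫ z in ball x r, u z ^ p := by
      rw [setAverage_eq, measureReal_def, hvol x hr.le, smul_eq_mul]
    have hub : u x ≤ K * ⨍ z in ball x r, u z := by
      rw [havg]
      exact (hu x r hr hball).trans_eq (by ring)
    have havg_nonneg : (0:ℝ) ≤ ⨍ z in ball x r, u z := by
      rw [havg]; positivity
    calc u x ^ p ≤ (K * ⨍ z in ball x r, u z) ^ p :=
          Real.rpow_le_rpow (hnonneg x) hub hp.le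
      _ = K ^ p * (⨍ z in ball x r, u z) ^ p := Real.mul_rpow hK0.le havg_nonneg
      _ ≤ K ^ p * ⨍ z in ball x r, u z ^ p :=
          mul_le_mul_of_nonneg_left hjen (Real.rpow_nonneg hK0.le p)
      _ = K ^ p / (unitBallVol n * r ^ n) * ∫ z in ball x r, u z ^ p := by
          rw [havgp]; ring
  · -- case 0 < p < 1 : Pavlović's iteration
    set q : ℝ := 1 - p with hqdef
    have hq0 : 0 < q := by simp [hqdef]; linarith
    have hq1 : q < 1 := by simp [hqdef]; linarith
    have hsum1 : Summable (fun j : ℕ => ((j:ℝ)+1) * q^j) := by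
      have h1 : Summable (fun j : ℕ => (j:ℝ) * q^j) := by
        simpa [pow_one] using summable_pow_mul_geometric_of_norm_lt_one (R := ℝ) 1
          (r := q) (by rw [Real.norm_eq_abs, abs_of_pos hq0]; exact hq1)
      have h2 : Summable (fun j : ℕ => q^j) := summable_geometric_of_lt_one hq0.le hq1
      simpa [add_mul, one_mul] using h1.add h2
    set T : ℝ := ∑' j : ℕ, ((j:ℝ)+1) * q^j with hTdef
    have hT0 : 0 ≤ T := tsum_nonneg fun j => by positivity
    refine ⟨K * 2 ^ ((n:ℝ) * T * p), ?_, ?_⟩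
    · have h2 : (1:ℝ) ≤ 2 ^ ((n:ℝ)*T*p) := Real.one_le_rpow one_le_two (by positivity)
      nlinarith
    intro x r hr hball
    obtain ⟨M, hM1, hMb⟩ := qns_bounded_on_closedBall hDopen hnonneg hloc hK hu hball
    have hM0 : (0:ℝ) < M := lt_of_lt_of_le one_pos hM1
    have hVpos : (0:ℝ) < unitBallVol n * r ^ n := by positivity
    have hIu : IntegrableOn u (ball x r) volume :=
      (hloc.integrableOn_compact_subset hball (isCompact_closedBall x r)).mono_set
        ball_subset_closedBall
    have hIup : IntegrableOn (fun z => u z ^ p) (ball x r) volume := by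
      apply Measure.integrableOn_of_bounded (M := M ^ p) measure_ball_lt_top.ne
        ((hmeas.pow measurable_const).aestronglyMeasurable)
      filter_upwards [ae_restrict_mem measurableSet_ball] with z hz
      rw [Real.norm_of_nonneg (Real.rpow_nonneg (hnonneg z) p)]
      exact Real.rpow_le_rpow (hnonneg z) (hMb z (ball_subset_closedBall hz)) hp.le
    set A : ℝ := ∫ z in ball x r, u z ^ p with hAdef
    have hA0 : 0 ≤ A :=
      setIntegral_nonneg measurableSet_ball fun z _ => Real.rpow_nonneg (hnonneg z) p
    -- the radii
    set t : ℕ → ℝ := fun k => r - r * (2⁻¹:ℝ)^k with htdef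
    set δ : ℕ → ℝ := fun k => r * (2⁻¹:ℝ)^(k+1) with hδdef
    have hhalf : ∀ k : ℕ, (0:ℝ) < (2⁻¹:ℝ)^k ∧ (2⁻¹:ℝ)^k ≤ 1 := fun k =>
      ⟨by positivity, pow_le_one₀ (by norm_num) (by norm_num)⟩
    have ht0 : ∀ k, 0 ≤ t k := by
      intro k
      have := (hhalf k).2
      simp only [htdef]
      nlinarith
    have htr : ∀ k, t k ≤ r := by
      intro k
      have := (hhalf k).1
      simp only [htdef]
      nlinarith
    have htltr : ∀ k, t k < r := by
      intro k
      have := (hhalf k).1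
      simp only [htdef]
      nlinarith
    have hδpos : ∀ k, 0 < δ k := fun k => by simp only [hδdef]; positivity
    have htsucc : ∀ k, t k + δ k = t (k+1) := by
      intro k
      simp only [htdef, hδdef, pow_succ]
      ring
    -- the sups
    set Mt : ℕ → ℝ := fun k => sSup (u '' closedBall x (t k)) with hMtdef
    have hMtle : ∀ k, ∀ y ∈ closedBall x (t k), u y ≤ Mt k := by
      intro k y hy
      apply le_csSup
      · refine ⟨M, ?_⟩
        rintro _ ⟨z, hz, rfl⟩
        exact hMb z (closedBall_subset_closedBall (htr k) hz)
      · exact mem_image_of_mem u hy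
    have hMtnn : ∀ k, 0 ≤ Mt k := fun k =>
      (hnonneg x).trans (hMtle k x (mem_closedBall_self (ht0 k)))
    have hMtM : ∀ k, Mt k ≤ M := by
      intro k
      apply Real.sSup_le _ hM0.le
      rintro _ ⟨z, hz, rfl⟩
      exact hMb z (closedBall_subset_closedBall (htr k) hz)
    -- the one-step inequality
    set B : ℕ → ℝ := fun k => K * 2^((k+1)*n) * A / (unitBallVol n * r^n) with hBdef
    have hBnn : ∀ k, 0 ≤ B k :=
      fun k => div_nonneg (mul_nonneg (by positivity) hA0) hVpos.le
    have hstep : ∀ k, Mt k ≤ B k * Mt (k+1) ^ q := by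
      intro k
      apply Real.sSup_le
      · rintro _ ⟨y, hy, rfl⟩
        have hy' : dist y x ≤ t k := mem_closedBall.1 hy
        have hyD : closedBall y (δ k) ⊆ closedBall x (t (k+1)) := by
          intro w hw
          rw [mem_closedBall]
          calc dist w x ≤ dist w y + dist y x := dist_triangle _ _ _
            _ ≤ δ k + t k := add_le_add (mem_closedBall.1 hw) hy'
            _ = t (k+1) := by rw [← htsucc k]; ring
        have hsubB : ball y (δ k) ⊆ ball x r := by
          intro w hw
          rw [mem_ball]
          calc dist w x ≤ dist w y + dist y x := dist_triangle _ _ _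
            _ < δ k + t k := add_lt_add_of_lt_of_le (mem_ball.1 hw) hy'
            _ = t (k+1) := by rw [← htsucc k]; ring
            _ < r := htltr (k+1)
        have hsubCB : ball y (δ k) ⊆ closedBall x (t (k+1)) :=
          ball_subset_closedBall.trans hyD
        have h2 := hu y (δ k) (hδpos k)
          ((hyD.trans (closedBall_subset_closedBall (htr (k+1)))).trans hball)
        refine h2.trans ?_
        have hIu' : IntegrableOn u (ball y (δ k)) volume := hIu.mono_set hsubB
        have hIup' : IntegrableOn (fun z => Mt (k+1) ^ q * u z ^ p) (ball y (δ k)) volume :=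
          (hIup.mono_set hsubB).const_mul _
        have hptwise : ∀ z ∈ ball y (δ k), u z ≤ Mt (k+1) ^ q * u z ^ p := by
          intro z hz
          rcases (hnonneg z).eq_or_lt with h0 | h0
          · rw [← h0, Real.zero_rpow hp.ne', mul_zero]
          · have h3 : u z ≤ Mt (k+1) := hMtle (k+1) z (hsubCB hz)
            calc u z = u z ^ (q + p) := by
                  rw [show q + p = 1 by simp [hqdef], Real.rpow_one]
              _ = u z ^ q * u z ^ p := Real.rpow_add h0 q p
              _ ≤ Mt (k+1) ^ q * u z ^ p :=
                  mul_le_mul_of_nonneg_right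
                    (Real.rpow_le_rpow (hnonneg z) h3 hq0.le)
                    (Real.rpow_nonneg (hnonneg z) p)
        have hint1 : ∫ z in ball y (δ k), u z
            ≤ Mt (k+1) ^ q * ∫ z in ball y (δ k), u z ^ p := by
          rw [← integral_const_mul]
          exact setIntegral_mono_on hIu' hIup' measurableSet_ball hptwise
        have hint3 : ∫ z in ball y (δ k), u z ^ p ≤ A :=
          setIntegral_mono_set hIup
            (ae_of_all _ fun z => Real.rpow_nonneg (hnonneg z) p)
            (HasSubset.Subset.eventuallyLE hsubB)
        have hδn : δ k ^ n = r ^ n * ((2:ℝ)^((k+1)*n))⁻¹ := by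
          simp only [hδdef]
          rw [mul_pow, ← pow_mul, ← inv_pow]
        calc K / (unitBallVol n * δ k ^ n) * ∫ z in ball y (δ k), u z
            ≤ K / (unitBallVol n * δ k ^ n) * (Mt (k+1) ^ q * A) := by
              apply mul_le_mul_of_nonneg_left _ (by positivity)
              exact hint1.trans
                (mul_le_mul_of_nonneg_left hint3 (Real.rpow_nonneg (hMtnn _) q))
          _ = B k * Mt (k+1) ^ q := by
              rw [hBdef, hδn]
              have h2n : (0:ℝ) < (2:ℝ)^((k+1)*n) := by positivity
              field_simp
      · exact mul_nonneg (hBnn k) (Real.rpow_nonneg (hMtnn _) q)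
    rcases hA0.eq_or_lt with hA0' | hApos
    · -- A = 0
      have hB0 : B 0 = 0 := by rw [hBdef, ← hA0']; ring
      have h1 : Mt 0 ≤ 0 := by
        have := hstep 0
        rwa [hB0, zero_mul] at this
      have hux : u x = 0 :=
        le_antisymm ((hMtle 0 x (mem_closedBall_self (ht0 0))).trans h1) (hnonneg x)
      rw [hux, Real.zero_rpow hp.ne', ← hA0', mul_zero]
    · -- A > 0 : the bootstrapping
      set β : ℝ := K * A / (unitBallVol n * r ^ n) with hβdef
      have hβpos : 0 < β := div_pos (mul_pos hK0 hApos) hVpos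
      set s : ℕ → ℝ := fun k => ∑ j ∈ Finset.range k, q^j with hsdef
      set c : ℕ → ℝ := fun k => ∑ j ∈ Finset.range k, ((j:ℝ)+1) * q^j with hcdef
      set g : ℕ → ℝ := fun k => β ^ (s k) * (2:ℝ) ^ ((n:ℝ) * c k) with hgdef
      have hgpos : ∀ k, 0 < g k := fun k =>
        mul_pos (Real.rpow_pos_of_pos hβpos _) (Real.rpow_pos_of_pos two_pos _)
      have hmain : ∀ k, u x ≤ g k * Mt k ^ (q^k) := by
        intro k
        induction k with
        | zero =>
          have h1 : u x ≤ Mt 0 := hMtle 0 x (mem_closedBall_self (ht0 0))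
          simpa [hgdef, hsdef, hcdef, Finset.sum_range_zero, Real.rpow_zero,
            Real.rpow_one] using h1
        | succ k ih =>
          have h2 : Mt k ^ ((q^k : ℝ)) ≤ (B k * Mt (k+1) ^ q) ^ ((q^k : ℝ)) :=
            Real.rpow_le_rpow (hMtnn k) (hstep k) (by positivity)
          have h3 : u x ≤ g k * (B k * Mt (k+1) ^ q) ^ ((q^k : ℝ)) :=
            ih.trans (mul_le_mul_of_nonneg_left h2 (hgpos k).le)
          have hBk : B k = β * (2:ℝ) ^ ((((k+1)*n : ℕ)):ℝ) := by
            rw [hBdef, hβdef, Real.rpow_natCast]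
            push_cast
            ring
          have hexp : (B k * Mt (k+1) ^ q) ^ ((q^k : ℝ))
              = β ^ ((q^k : ℝ)) * (2:ℝ) ^ (((((k+1)*n : ℕ)):ℝ) * q^k)
                * Mt (k+1) ^ ((q^(k+1) : ℝ)) := by
            rw [hBk, Real.mul_rpow (by positivity) (Real.rpow_nonneg (hMtnn (k+1)) q),
              Real.mul_rpow hβpos.le (by positivity),
              ← Real.rpow_mul (by norm_num : (0:ℝ) ≤ 2),
              ← Real.rpow_mul (hMtnn (k+1)), ← pow_succ']
          have hgsucc : g k * (β ^ ((q^k : ℝ)) * (2:ℝ) ^ (((((k+1)*n : ℕ)):ℝ) * q^k))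
              = g (k+1) := by
            simp only [hgdef]
            rw [mul_mul_mul_comm, ← Real.rpow_add hβpos, ← Real.rpow_add two_pos]
            congr 1
            · congr 1
              simp [hsdef, Finset.sum_range_succ]
            · congr 1
              simp only [hcdef, Finset.sum_range_succ]
              push_cast
              ring
          calc u x ≤ g k * (B k * Mt (k+1) ^ q) ^ ((q^k : ℝ)) := h3
            _ = g k * (β ^ ((q^k : ℝ)) * (2:ℝ) ^ (((((k+1)*n : ℕ)):ℝ) * q^k))
                * Mt (k+1) ^ ((q^(k+1) : ℝ)) := by rw [hexp]; ring
            _ = g (k+1) * Mt (k+1) ^ ((q^(k+1) : ℝ)) := by rw [hgsucc]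
      have hbound : ∀ k, u x ≤ β ^ (s k) * 2 ^ ((n:ℝ)*T) * M ^ ((q^k : ℝ)) := by
        intro k
        refine (hmain k).trans ?_
        have h1 : Mt k ^ ((q^k : ℝ)) ≤ M ^ ((q^k : ℝ)) :=
          Real.rpow_le_rpow (hMtnn k) (hMtM k) (by positivity)
        have hck : c k ≤ T :=
          Summable.sum_le_tsum (Finset.range k) (fun j _ => by positivity) hsum1
        have h2 : (2:ℝ) ^ ((n:ℝ) * c k) ≤ 2 ^ ((n:ℝ) * T) :=
          (Real.rpow_le_rpow_left_iff one_lt_two).2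
            (mul_le_mul_of_nonneg_left hck (Nat.cast_nonneg n))
        calc g k * Mt k ^ ((q^k : ℝ)) ≤ g k * M ^ ((q^k : ℝ)) :=
              mul_le_mul_of_nonneg_left h1 (hgpos k).le
          _ ≤ β ^ (s k) * 2 ^ ((n:ℝ)*T) * M ^ ((q^k : ℝ)) := by
              apply mul_le_mul_of_nonneg_right _ (Real.rpow_nonneg hM0.le _)
              simp only [hgdef]
              exact mul_le_mul_of_nonneg_left h2 (Real.rpow_nonneg hβpos.le _)
      have hsq : Tendsto (fun k : ℕ => (q:ℝ)^k) atTop (nhds 0) :=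
        tendsto_pow_atTop_nhds_zero_of_lt_one hq0.le hq1
      have hstend : Tendsto s atTop (nhds p⁻¹) := by
        have hg := hasSum_geometric_of_lt_one hq0.le hq1
        have h := hg.tendsto_sum_nat
        simpa [hsdef, hqdef, sub_sub_cancel] using h
      have hftend : Tendsto (fun k => β ^ (s k) * 2 ^ ((n:ℝ)*T) * M ^ ((q^k : ℝ)))
          atTop (nhds (β ^ (p⁻¹) * 2 ^ ((n:ℝ)*T) * 1)) := by
        apply Tendsto.mul
        apply Tendsto.mul
        · exact (Real.continuousAt_const_rpow hβpos.ne').tendsto.comp hstend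
        · exact tendsto_const_nhds
        · have h := (Real.continuousAt_const_rpow (a := M) hM0.ne').tendsto.comp hsq
          simpa [Real.rpow_zero, Function.comp_def] using h
      have hfinal : u x ≤ β ^ (p⁻¹) * 2 ^ ((n:ℝ)*T) := by
        have h := ge_of_tendsto' hftend hbound
        simpa using h
      have h6 : u x ^ p ≤ (β ^ (p⁻¹) * 2 ^ ((n:ℝ)*T)) ^ p :=
        Real.rpow_le_rpow (hnonneg x) hfinal hp.le
      have h7 : (β ^ (p⁻¹) * 2 ^ ((n:ℝ)*T)) ^ p = β * 2 ^ ((n:ℝ)*T*p) := by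
        rw [Real.mul_rpow (Real.rpow_nonneg hβpos.le _) (Real.rpow_nonneg (by norm_num) _),
          ← Real.rpow_mul hβpos.le, ← Real.rpow_mul (by norm_num : (0:ℝ) ≤ 2),
          inv_mul_cancel₀ hp.ne', Real.rpow_one]
      calc u x ^ p ≤ β * 2 ^ ((n:ℝ)*T*p) := h6.trans_eq h7
        _ = K * 2 ^ ((n:ℝ)*T*p) / (unitBallVol n * r ^ n) * A := by
            rw [hβdef]; ring
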